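/- For any graph G and any two distinct ω-edge blocks U and W of G, the set of edges of G with one endpoint in U and the other endpoint in W is finite. -/
import Mathlib


/-- The set of edges of `G` with one endpoint in `A` and the other in `B`. -/
def edgesBetween {V : Type*} (G : SimpleGraph V) (A B : Set V) : Set (Sym2 V) :=
  {e | e ∈ G.edgeSet ∧ ∃ x ∈ A, ∃ y ∈ B, e = s(x, y)}

/-- `x ~ y` iff no finite set of edges of `G` separates `x` from `y`. -/
def OmegaEquiv {V : Type*} (G : SimpleGraph V) (x y : V) : Prop :=
  ∀ F : Set (Sym2 V), F.Finite → (G.deleteEdges F).Reachable x y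

/-- The ω-edge blocks of `G` are the equivalence classes of `OmegaEquiv`. -/
def IsOmegaEdgeBlock {V : Type*} (G : SimpleGraph V) (B : Set V) : Prop :=
  ∃ x, B = {y | OmegaEquiv G x y}

/-- Between any two distinct ω-edge blocks of a graph there are only finitely many edges. -/
theorem edgesBetween_distinct_omegaEdgeBlocks_finite {V : Type*} (G : SimpleGraph V)
    (U W : Set V) (hU : IsOmegaEdgeBlock G U) (hW : IsOmegaEdgeBlock G W) (hUW : U ≠ W) :
    (edgesBetween G U W).Finite := by
  obtain ⟨u, rfl⟩ := hU
  obtain ⟨w, rfl⟩ := hW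
  have huw : ¬ OmegaEquiv G u w := by
    intro h
    apply hUW
    ext y
    constructor
    · intro hy F hF
      exact (h F hF).symm.trans (hy F hF)
    · intro hy F hF
      exact (h F hF).trans (hy F hF)
  unfold OmegaEquiv at huw
  push_neg at huw
  obtain ⟨F, hFfin, hnr⟩ := huw
  apply hFfin.subset
  rintro e ⟨heE, x, hx, y, hy, rfl⟩
  by_contra heF
  apply hnr
  have hadj : (G.deleteEdges F).Adj x y := by
    rw [SimpleGraph.deleteEdges_adj]
    exact ⟨(SimpleGraph.mem_edgeSet G).mp heE, heF⟩
  exact ((hx F hFfin).trans hadj.reachable).trans (hy F hFfin).symm
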